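/- Let w₁ > ⋯ > wₙ > 0 be super-increasing with quota q ∈ (0, w(N)], and let A(q) = {a₀ < ⋯ < a_r}. For any agent i < n: (1) if i and i+1 are both in A(q) or both not in A(q), then φᵢ(q) = φ_{i+1}(q); (2) if i ∉ A(q) and i+1 ∈ A(q), then φᵢ(q) ≥ φ_{i+1}(q), with equality iff i+1 = a_r; (3) if i ∈ A(q) and i+1 ∉ A(q), then φᵢ(q) > φ_{i+1}(q). -/

import Mathlib

/-- The Shapley value of agent `i` in the weighted voting game `(w, q)` on `Fin n`. -/
noncomputable def shapley (n : ℕ) (w : Fin n → ℝ) (q : ℝ) (i : Fin n) : ℝ :=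
  (∑ σ : Equiv.Perm (Fin n),
      ((if q ≤ ∑ j ∈ insert i (Finset.univ.filter fun j => σ j < σ i), w j then (1:ℝ) else 0)
        - (if q ≤ ∑ j ∈ Finset.univ.filter (fun j => σ j < σ i), w j then (1:ℝ) else 0)))
    / (Nat.factorial n)

open Finset

/-- binary encoding of a coalition -/
def benc (n : ℕ) (S : Finset (Fin n)) : ℕ := ∑ k ∈ S, 2^(n - 1 - (k:ℕ))

lemma sum_range_two_pow (E : ℕ) : ∑ e ∈ range E, 2^e = 2^E - 1 := by
  induction E with
  | zero => simp
  | succ E ih =>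
    rw [Finset.sum_range_succ, ih, pow_succ]
    have : 1 ≤ 2^E := Nat.one_le_two_pow
    omega

/-- power bound: sum of encodings of elements above k is < 2^(n-1-k) -/
lemma benc_lt (n : ℕ) (S : Finset (Fin n)) (k : Fin n) (h : ∀ l ∈ S, k < l) :
    benc n S < 2^(n - 1 - (k:ℕ)) := by
  have hinj : ∀ l₁ ∈ S, ∀ l₂ ∈ S, n - 1 - (l₁ : Fin n).1 = n - 1 - (l₂ : Fin n).1 → l₁ = l₂ := by
    intro l₁ h₁ l₂ h₂ h
    have := l₁.2; have := l₂.2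
    exact Fin.ext (by omega)
  have h1 : benc n S = ∑ e ∈ S.image (fun l : Fin n => n - 1 - (l:ℕ)), 2^e := by
    rw [Finset.sum_image hinj]; rfl
  have h2 : S.image (fun l : Fin n => n - 1 - (l:ℕ)) ⊆ range (n - 1 - (k:ℕ)) := by
    intro e he
    simp only [mem_image] at he
    obtain ⟨l, hl, rfl⟩ := he
    have hkl := h l hl
    have := l.2; have := k.2
    have : (k:ℕ) < (l:ℕ) := hkl
    simp only [mem_range]; omega
  calc benc n S ≤ ∑ e ∈ range (n - 1 - (k:ℕ)), 2^e := by
        rw [h1]; exact Finset.sum_le_sum_of_subset h2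
    _ = 2^(n-1-(k:ℕ)) - 1 := sum_range_two_pow _
    _ < 2^(n-1-(k:ℕ)) := by have : 1 ≤ 2^(n-1-(k:ℕ)) := Nat.one_le_two_pow; omega

/-- core comparison for superincreasing positive weights -/
lemma core_lt {n : ℕ} {f : Fin n → ℝ} (hpos : ∀ i, 0 < f i)
    (hsi : ∀ i : Fin n, (∑ j ∈ Finset.univ.filter (fun j => i < j), f j) < f i)
    (S T : Finset (Fin n)) (k : Fin n) (hkT : k ∈ T) (hkS : k ∉ S)
    (hagree : ∀ l, l < k → (l ∈ S ↔ l ∈ T)) :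
    ∑ l ∈ S, f l < ∑ l ∈ T, f l := by
  have hS : S.filter (fun l => ¬ l < k) = S.filter (fun l => k < l) := by
    ext l; simp only [mem_filter]
    constructor
    · rintro ⟨hl, h2⟩
      refine ⟨hl, ?_⟩
      rcases lt_or_eq_of_le (not_lt.mp h2) with h | h
      · exact h
      · exact absurd (h ▸ hl) hkS
    · rintro ⟨hl, h2⟩; exact ⟨hl, not_lt.mpr h2.le⟩
  have hfil : S.filter (fun l => l < k) = T.filter (fun l => l < k) := by
    ext l; simp only [mem_filter]
    constructor
    · rintro ⟨hl, h2⟩; exact ⟨(hagree l h2).mp hl, h2⟩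
    · rintro ⟨hl, h2⟩; exact ⟨(hagree l h2).mpr hl, h2⟩
  have h1 : ∑ l ∈ S, f l = ∑ l ∈ S.filter (fun l => l < k), f l
      + ∑ l ∈ S.filter (fun l => k < l), f l := by
    rw [← hS, Finset.sum_filter_add_sum_filter_not]
  have h2 : ∑ l ∈ S.filter (fun l => k < l), f l
      ≤ ∑ l ∈ Finset.univ.filter (fun l => k < l), f l := by
    apply Finset.sum_le_sum_of_subset_of_nonneg
    · intro l hl; simp only [mem_filter] at *; exact ⟨mem_univ _, hl.2⟩
    · intro l _ _; exact (hpos l).le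
  have h3 : insert k (T.filter (fun l => l < k)) ⊆ T := by
    intro l hl
    rcases mem_insert.mp hl with rfl | hl
    · exact hkT
    · exact (mem_filter.mp hl).1
  have h4 : f k + ∑ l ∈ T.filter (fun l => l < k), f l ≤ ∑ l ∈ T, f l := by
    have := Finset.sum_le_sum_of_subset_of_nonneg h3 (fun l _ _ => (hpos l).le)
    rwa [Finset.sum_insert (by simp)] at this
  calc ∑ l ∈ S, f l
      < ∑ l ∈ S.filter (fun l => l < k), f l + f k := by
        have := lt_of_le_of_lt h2 (hsi k); linarith [h1]
    _ = f k + ∑ l ∈ T.filter (fun l => l < k), f l := by rw [hfil]; ring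
    _ ≤ ∑ l ∈ T, f l := h4

lemma benc_real {n : ℕ} (S : Finset (Fin n)) :
    ((benc n S : ℕ) : ℝ) = ∑ l ∈ S, (2:ℝ)^(n - 1 - (l:ℕ)) := by
  unfold benc; push_cast; rfl

lemma g_si (n : ℕ) (k : Fin n) :
    (∑ l ∈ Finset.univ.filter (fun l => k < l), (2:ℝ)^(n - 1 - (l:ℕ))) < (2:ℝ)^(n - 1 - (k:ℕ)) := by
  have h := benc_lt n (Finset.univ.filter (fun l => k < l)) k (fun l hl => (mem_filter.mp hl).2)
  have := benc_real (n := n) (Finset.univ.filter (fun l => k < l))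
  rw [← this]
  exact_mod_cast h

lemma exists_min_diff {n : ℕ} {S T : Finset (Fin n)} (hne : S ≠ T) :
    ∃ k : Fin n, (∀ l, l < k → (l ∈ S ↔ l ∈ T)) ∧ ((k ∈ S ∧ k ∉ T) ∨ (k ∈ T ∧ k ∉ S)) := by
  set D := (S \ T) ∪ (T \ S) with hD
  have hDne : D.Nonempty := by
    by_contra hemp
    rw [Finset.not_nonempty_iff_eq_empty] at hemp
    apply hne
    have h1 : S \ T = ∅ := by
      rw [← Finset.subset_empty, ← hemp]; exact Finset.subset_union_left
    have h2 : T \ S = ∅ := by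
      rw [← Finset.subset_empty, ← hemp]; exact Finset.subset_union_right
    exact Finset.Subset.antisymm (Finset.sdiff_eq_empty_iff_subset.mp h1)
      (Finset.sdiff_eq_empty_iff_subset.mp h2)
  refine ⟨D.min' hDne, ?_, ?_⟩
  · intro l hl
    by_contra hcon
    have hlD : l ∈ D := by simp only [hD, mem_union, mem_sdiff]; tauto
    exact absurd (Finset.min'_le D l hlD) (not_le.mpr hl)
  · have hkD := Finset.min'_mem D hDne
    rcases mem_union.mp hkD with h | h <;> rw [mem_sdiff] at h
    · exact Or.inl h
    · exact Or.inr h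

lemma benc_lt_of_min {n : ℕ} {S T : Finset (Fin n)} {k : Fin n}
    (hkT : k ∈ T) (hkS : k ∉ S) (hagree : ∀ l, l < k → (l ∈ S ↔ l ∈ T)) :
    benc n S < benc n T := by
  have hg : ∀ i : Fin n, (0:ℝ) < (2:ℝ)^(n - 1 - (i:ℕ)) := fun i => by positivity
  have := core_lt hg (g_si n) S T k hkT hkS hagree
  rw [← benc_real, ← benc_real] at this
  exact_mod_cast this

/-- strict monotonicity: smaller encoding means smaller weight -/
lemma benc_mono {n : ℕ} {w : Fin n → ℝ} (hpos : ∀ i, 0 < w i)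
    (hsi : ∀ i : Fin n, (∑ j ∈ Finset.univ.filter (fun j => i < j), w j) < w i)
    (S T : Finset (Fin n)) (h : benc n S < benc n T) :
    ∑ l ∈ S, w l < ∑ l ∈ T, w l := by
  have hne : S ≠ T := by rintro rfl; exact lt_irrefl _ h
  obtain ⟨k, hagree, hc⟩ := exists_min_diff hne
  rcases hc with ⟨h1, h2⟩ | ⟨h1, h2⟩
  · exact absurd (benc_lt_of_min h1 h2 (fun l hl => (hagree l hl).symm)) (by omega)
  · exact core_lt hpos hsi S T k h1 h2 hagree

lemma benc_inj {n : ℕ} (S T : Finset (Fin n)) (h : benc n S = benc n T) : S = T := by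
  by_contra hne
  obtain ⟨k, hagree, hc⟩ := exists_min_diff hne
  rcases hc with ⟨h1, h2⟩ | ⟨h1, h2⟩
  · exact absurd (benc_lt_of_min h1 h2 (fun l hl => (hagree l hl).symm)) (by omega)
  · exact absurd (benc_lt_of_min h1 h2 hagree) (by omega)

/-- a coalition wins iff its encoding is at least that of `A` -/
lemma win_iff {n : ℕ} {w : Fin n → ℝ} (hpos : ∀ i, 0 < w i)
    (hsi : ∀ i : Fin n, (∑ j ∈ Finset.univ.filter (fun j => i < j), w j) < w i)
    {q : ℝ} {A Pm : Finset (Fin n)}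
    (hβ : benc n Pm + 1 = benc n A)
    (hlo : (∑ i ∈ Pm, w i) < q) (hhi : q ≤ ∑ i ∈ A, w i)
    (S : Finset (Fin n)) :
    (q ≤ ∑ l ∈ S, w l) ↔ benc n A ≤ benc n S := by
  constructor
  · intro hq
    by_contra hcon
    push_neg at hcon
    have hle : benc n S ≤ benc n Pm := by omega
    have : ∑ l ∈ S, w l ≤ ∑ l ∈ Pm, w l := by
      rcases Nat.lt_or_ge (benc n S) (benc n Pm) with h | h
      · exact (benc_mono hpos hsi S Pm h).le
      · have : benc n S = benc n Pm := by omega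
        rw [benc_inj S Pm this]
    linarith
  · intro h
    rcases Nat.lt_or_ge (benc n A) (benc n S) with h' | h'
    · linarith [benc_mono hpos hsi A S h']
    · have : benc n A = benc n S := by omega
      rw [← benc_inj A S this]
      exact hhi

/-- realizability: any set avoiding i arises as the predecessor set of i -/
lemma exists_perm {n : ℕ} (i : Fin n) (S : Finset (Fin n)) (hiS : i ∉ S) :
    ∃ σ : Equiv.Perm (Fin n), Finset.univ.filter (fun k => σ k < σ i) = S := by
  classical
  have hn : 0 < n := i.pos
  set f : Fin n → ℕ := fun k => (if k ∈ S then 0 else if k = i then 1 else 2) * n + (k:ℕ) with hf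
  have hmod : ∀ a : Fin n, (f a) % n = (a : ℕ) := by
    intro a
    simp only [hf]
    rw [add_comm, Nat.add_mul_mod_self_right]
    exact Nat.mod_eq_of_lt a.2
  have hfinj : Function.Injective f := by
    intro a b hab
    have : (a : ℕ) = (b : ℕ) := by rw [← hmod a, ← hmod b, hab]
    exact Fin.ext this
  set g := Tuple.sort f with hg
  have hmono : StrictMono (f ∘ g) :=
    (Tuple.monotone_sort f).strictMono_of_injective (hfinj.comp g.injective)
  refine ⟨g⁻¹, ?_⟩
  ext k
  simp only [mem_filter, mem_univ, true_and]
  have key : g⁻¹ k < g⁻¹ i ↔ f k < f i := by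
    rw [← hmono.lt_iff_lt]
    simp only [Function.comp_apply, Equiv.Perm.inv_def, Equiv.apply_symm_apply]
  rw [key]
  have hfi : f i = n + (i:ℕ) := by simp [hf, hiS]
  have hi2 := i.2; have hk2 := k.2
  by_cases hkS : k ∈ S
  · have hfk : f k = (k:ℕ) := by simp [hf, hkS]
    simp only [hkS, iff_true, hfk, hfi]
    omega
  · by_cases hki : k = i
    · subst hki
      simp [hkS]
    · have hfk : f k = 2 * n + (k:ℕ) := by simp [hf, hkS, hki]
      simp only [hkS, iff_false, hfk, hfi, not_lt]
      omega

lemma benc_split {n : ℕ} (i j : Fin n) (hij : (j:ℕ) = (i:ℕ) + 1) (S : Finset (Fin n)) :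
    benc n S = benc n (S.filter (fun k => k < i))
      + ((if i ∈ S then 2^(n-1-(i:ℕ)) else 0)
      + ((if j ∈ S then 2^(n-1-(j:ℕ)) else 0)
      + benc n (S.filter (fun k => j < k)))) := by
  classical
  unfold benc
  rw [← Finset.sum_filter_add_sum_filter_not S (fun k => k < i)]
  congr 1
  rw [← Finset.sum_filter_add_sum_filter_not (S.filter (fun k => ¬ k < i)) (fun k => k = i)]
  congr 1
  · rw [Finset.filter_filter]
    have h1 : S.filter (fun k => ¬ k < i ∧ k = i) = S.filter (fun k => k = i) := by
      apply Finset.filter_congr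
      intro k _
      constructor
      · rintro ⟨_, h⟩; exact h
      · rintro rfl; exact ⟨lt_irrefl _, rfl⟩
    rw [h1, Finset.filter_eq']
    split_ifs <;> simp
  · rw [Finset.filter_filter,
      ← Finset.sum_filter_add_sum_filter_not (S.filter (fun k => ¬ k < i ∧ ¬ k = i)) (fun k => k = j)]
    congr 1
    · rw [Finset.filter_filter]
      have h1 : S.filter (fun k => (¬ k < i ∧ ¬ k = i) ∧ k = j) = S.filter (fun k => k = j) := by
        apply Finset.filter_congr
        intro k _
        constructor
        · rintro ⟨_, h⟩; exact h
        · rintro rfl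
          refine ⟨⟨?_, ?_⟩, rfl⟩
          · rw [Fin.lt_def]; omega
          · intro h; rw [Fin.ext_iff] at h; omega
      rw [h1, Finset.filter_eq']
      split_ifs <;> simp
    · rw [Finset.filter_filter]
      have h1 : S.filter (fun k => (¬ k < i ∧ ¬ k = i) ∧ ¬ k = j) = S.filter (fun k => j < k) := by
        apply Finset.filter_congr
        intro k _
        simp only [Fin.lt_def, Fin.ext_iff, not_lt]
        omega
      rw [h1]

lemma benc_decomp {n : ℕ} (i j : Fin n) (hij : (j:ℕ) = (i:ℕ) + 1) (S : Finset (Fin n)) :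
    ∃ c, benc n S = 4 * 2^(n-1-(j:ℕ)) * c
      + (if i ∈ S then 2 * 2^(n-1-(j:ℕ)) else 0)
      + (if j ∈ S then 2^(n-1-(j:ℕ)) else 0)
      + benc n (S.filter (fun k => j < k))
    ∧ benc n (S.filter (fun k => j < k)) < 2^(n-1-(j:ℕ)) := by
  classical
  have hjn : (j:ℕ) < n := j.2
  have hi2 : 2^(n-1-(i:ℕ)) = 2 * 2^(n-1-(j:ℕ)) := by
    have h : n-1-(i:ℕ) = (n-1-(j:ℕ)) + 1 := by omega
    rw [h, pow_succ]; ring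
  have hdvd : 4 * 2^(n-1-(j:ℕ)) ∣ benc n (S.filter (fun k => k < i)) := by
    apply Finset.dvd_sum
    intro k hk
    have hki : k < i := (mem_filter.mp hk).2
    rw [Fin.lt_def] at hki
    have h4 : (4 : ℕ) * 2^(n-1-(j:ℕ)) = 2^(n+1-(j:ℕ)) := by
      have h : n+1-(j:ℕ) = (n-1-(j:ℕ)) + 2 := by omega
      rw [h, pow_add]; ring
    rw [h4]
    exact pow_dvd_pow 2 (by omega)
  obtain ⟨c, hc⟩ := hdvd
  refine ⟨c, ?_, ?_⟩
  · have := benc_split i j hij S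
    rw [this, hc, hi2]
    ring
  · exact benc_lt n _ j (fun l hl => (mem_filter.mp hl).2)

/-- master interval lemma: if a number with low bits clear lies in the critical
interval, the offset of `b` is in `(m, 3m)` -/
lemma master (m c C u r : ℕ) (hm : 0 < m) (hr : r < m) (hu : u < 4*m)
    (H1 : 4*m*c + r + m < 4*m*C + u) (H2 : 4*m*C + u ≤ 4*m*c + r + 2*m) :
    m < u ∧ u < 3*m := by
  rcases lt_trichotomy c C with hc | hc | hc
  · exfalso
    have h1 : 4*m*(c+1) ≤ 4*m*C := Nat.mul_le_mul_left _ hc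
    have h2 : 4*m*c + 4*m ≤ 4*m*C := by nlinarith
    linarith
  · subst hc
    constructor <;> linarith
  · exfalso
    have h1 : 4*m*(C+1) ≤ 4*m*c := Nat.mul_le_mul_left _ hc
    have h2 : 4*m*C + 4*m ≤ 4*m*c := by nlinarith
    linarith

lemma pointwise (n : ℕ) (bA : ℕ) (i j : Fin n) (hij' : i ≠ j) (σ : Equiv.Perm (Fin n)) :
    ((if bA ≤ benc n (insert i (Finset.univ.filter fun k => σ k < σ i)) then (1:ℝ) else 0)
      - (if bA ≤ benc n (Finset.univ.filter fun k => σ k < σ i) then (1:ℝ) else 0))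
    - ((if bA ≤ benc n (insert j (Finset.univ.filter fun k =>
          (σ * Equiv.swap i j) k < (σ * Equiv.swap i j) j)) then (1:ℝ) else 0)
      - (if bA ≤ benc n (Finset.univ.filter fun k =>
          (σ * Equiv.swap i j) k < (σ * Equiv.swap i j) j) then (1:ℝ) else 0))
    = (if bA ≤ benc n (insert i ((Finset.univ.filter fun k => σ k < σ i).erase j))
        then (1:ℝ) else 0)
      - (if bA ≤ benc n (insert j ((Finset.univ.filter fun k => σ k < σ i).erase j))
        then (1:ℝ) else 0) := by
  classical
  set P := Finset.univ.filter fun k => σ k < σ i with hP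
  have hswapj : ∀ k, (σ * Equiv.swap i j) k = σ (Equiv.swap i j k) := fun k => rfl
  have hτj : (σ * Equiv.swap i j) j = σ i := by
    rw [hswapj, Equiv.swap_apply_right]
  by_cases hjP : j ∈ P
  · have hσj : σ j < σ i := by
      rw [hP, mem_filter] at hjP; exact hjP.2
    have hQ : (Finset.univ.filter fun k =>
        (σ * Equiv.swap i j) k < (σ * Equiv.swap i j) j) = insert i (P.erase j) := by
      ext k
      simp only [mem_filter, mem_univ, true_and, hτj, hswapj, mem_insert, Finset.mem_erase, hP]
      by_cases hk : k = i
      · subst hk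
        simp [Equiv.swap_apply_left, hσj]
      · by_cases hk2 : k = j
        · subst hk2
          simp [Equiv.swap_apply_right, Ne.symm hij']
        · rw [Equiv.swap_apply_of_ne_of_ne hk hk2]
          simp [hk, hk2]
    rw [hQ]
    have hins : insert j (insert i (P.erase j)) = insert i P := by
      rw [Finset.insert_comm, Finset.insert_erase hjP]
    rw [hins, Finset.insert_erase hjP]
    ring
  · have hσj : ¬ σ j < σ i := by
      rw [hP, mem_filter] at hjP; simpa using hjP
    have hQ : (Finset.univ.filter fun k =>
        (σ * Equiv.swap i j) k < (σ * Equiv.swap i j) j) = P := by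
      ext k
      simp only [mem_filter, mem_univ, true_and, hτj, hswapj, hP]
      by_cases hk : k = i
      · subst hk
        simp [Equiv.swap_apply_left, hσj]
      · by_cases hk2 : k = j
        · subst hk2
          simp [Equiv.swap_apply_right, hσj]
        · rw [Equiv.swap_apply_of_ne_of_ne hk hk2]
      
    rw [hQ, Finset.erase_eq_of_notMem hjP]
    ring

noncomputable def ddf (n : ℕ) (bA : ℕ) (i j : Fin n) (S : Finset (Fin n)) : ℝ :=
  (if bA ≤ benc n (insert i S) then (1:ℝ) else 0)
    - (if bA ≤ benc n (insert j S) then (1:ℝ) else 0)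

noncomputable def shapley' (n : ℕ) (w : Fin n → ℝ) (q : ℝ) (i : Fin n) : ℝ :=
  (∑ σ : Equiv.Perm (Fin n),
      ((if q ≤ ∑ j ∈ insert i (Finset.univ.filter fun j => σ j < σ i), w j then (1:ℝ) else 0)
        - (if q ≤ ∑ j ∈ Finset.univ.filter (fun j => σ j < σ i), w j then (1:ℝ) else 0)))
    / (Nat.factorial n)

lemma shapley'_diff {n : ℕ} {w : Fin n → ℝ} (hpos : ∀ i, 0 < w i)
    (hsi : ∀ i : Fin n, (∑ j ∈ Finset.univ.filter (fun j => i < j), w j) < w i)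
    {q : ℝ} {A Pm : Finset (Fin n)}
    (hβ : benc n Pm + 1 = benc n A)
    (hlo : (∑ i ∈ Pm, w i) < q) (hhi : q ≤ ∑ i ∈ A, w i)
    (i j : Fin n) (hij' : i ≠ j) :
    shapley' n w q i - shapley' n w q j =
    (∑ σ : Equiv.Perm (Fin n),
        ddf n (benc n A) i j ((Finset.univ.filter fun k => σ k < σ i).erase j))
      / (Nat.factorial n) := by
  classical
  unfold shapley'
  rw [div_sub_div_same]
  congr 1
  have hw : ∀ S : Finset (Fin n), (q ≤ ∑ l ∈ S, w l) ↔ benc n A ≤ benc n S :=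
    win_iff hpos hsi hβ hlo hhi
  have e1 : ∀ (a : Fin n), (∑ σ : Equiv.Perm (Fin n),
      ((if q ≤ ∑ l ∈ insert a (Finset.univ.filter fun k => σ k < σ a), w l then (1:ℝ) else 0)
        - (if q ≤ ∑ l ∈ Finset.univ.filter (fun k => σ k < σ a), w l then (1:ℝ) else 0)))
      = ∑ σ : Equiv.Perm (Fin n),
      ((if benc n A ≤ benc n (insert a (Finset.univ.filter fun k => σ k < σ a)) then (1:ℝ) else 0)
        - (if benc n A ≤ benc n (Finset.univ.filter fun k => σ k < σ a) then (1:ℝ) else 0)) := by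
    intro a
    apply Finset.sum_congr rfl
    intro σ _
    rw [if_congr (hw _) rfl rfl, if_congr (hw _) rfl rfl]
  rw [e1 i, e1 j]
  have e2 := Equiv.sum_comp (Equiv.mulRight (Equiv.swap i j))
      (fun σ : Equiv.Perm (Fin n) =>
        ((if benc n A ≤ benc n (insert j (Finset.univ.filter fun k => σ k < σ j)) then (1:ℝ) else 0)
          - (if benc n A ≤ benc n (Finset.univ.filter fun k => σ k < σ j) then (1:ℝ) else 0)))
  simp only [Equiv.coe_mulRight] at e2
  rw [← e2, ← Finset.sum_sub_distrib]
  apply Finset.sum_congr rfl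
  intro σ _
  exact pointwise n (benc n A) i j hij' σ

/-- Comparison of Shapley values of consecutive agents `i, i+1` for
super-increasing weights: `A` is the unique set with `q ∈ (w(A⁻), w(A)]`,
and `a_r = max A`. -/
theorem stmt13 (n : ℕ) (w : Fin n → ℝ) (hpos : ∀ i, 0 < w i) (hdec : StrictAnti w)
    (hsi : ∀ i : Fin n, (∑ j ∈ Finset.univ.filter (fun j => i < j), w j) < w i)
    (q : ℝ) (hq1 : 0 < q) (hq2 : q ≤ ∑ i : Fin n, w i)
    (A Pm : Finset (Fin n))
    (hβ : (∑ i ∈ Pm, 2^(n - 1 - (i:ℕ)) : ℕ) + 1 = ∑ i ∈ A, 2^(n - 1 - (i:ℕ)))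
    (hlo : (∑ i ∈ Pm, w i) < q) (hhi : q ≤ ∑ i ∈ A, w i)
    (i j : Fin n) (hij : (j:ℕ) = (i:ℕ) + 1) :
    ((i ∈ A ↔ j ∈ A) → shapley n w q i = shapley n w q j) ∧
    (i ∉ A → j ∈ A →
      shapley n w q j ≤ shapley n w q i ∧
      (shapley n w q i = shapley n w q j ↔ ∀ k ∈ A, k ≤ j)) ∧
    (i ∈ A → j ∉ A → shapley n w q j < shapley n w q i) := by
  classical
  have hshap : shapley = shapley' := rfl
  have hbβ : benc n Pm + 1 = benc n A := hβ
  have hij' : i ≠ j := by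
    intro h; rw [Fin.ext_iff] at h; omega
  have hjn : (j:ℕ) < n := j.2
  obtain ⟨m, hmdef⟩ : ∃ m' : ℕ, m' = 2^(n-1-(j:ℕ)) := ⟨_, rfl⟩
  have hm : 0 < m := by rw [hmdef]; positivity
  have hi2m : 2^(n-1-(i:ℕ)) = 2*m := by
    have h : n-1-(i:ℕ) = (n-1-(j:ℕ)) + 1 := by omega
    rw [hmdef, h, pow_succ]; ring
  obtain ⟨bA, hbAdef⟩ : ∃ b : ℕ, b = benc n A := ⟨_, rfl⟩
  have hΔ : shapley n w q i - shapley n w q j =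
      (∑ σ : Equiv.Perm (Fin n),
        ddf n bA i j ((Finset.univ.filter fun k => σ k < σ i).erase j)) / (Nat.factorial n) := by
    rw [hshap, hbAdef]
    exact shapley'_diff hpos hsi hbβ hlo hhi i j hij'
  -- basic benc facts for sets avoiding i and j
  have hbi : ∀ S : Finset (Fin n), i ∉ S → benc n (insert i S) = 2*m + benc n S := by
    intro S hiS
    unfold benc
    rw [Finset.sum_insert hiS, hi2m]
  have hbj : ∀ S : Finset (Fin n), j ∉ S → benc n (insert j S) = m + benc n S := by
    intro S hjS
    unfold benc
    rw [Finset.sum_insert hjS, ← hmdef]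
  -- nonnegativity of ddf
  have hDnn : ∀ S : Finset (Fin n), i ∉ S → j ∉ S → 0 ≤ ddf n bA i j S := by
    intro S hiS hjS
    unfold ddf
    rw [hbi S hiS, hbj S hjS]
    split_ifs with ha hb hc
    · norm_num
    · norm_num
    · exfalso; omega
    · norm_num
  have hiP : ∀ σ : Equiv.Perm (Fin n),
      i ∉ (Finset.univ.filter fun k => σ k < σ i).erase j := by
    intro σ h
    exact absurd ((mem_filter.mp (Finset.mem_of_mem_erase h)).2) (lt_irrefl _)
  have hjP : ∀ σ : Equiv.Perm (Fin n),
      j ∉ (Finset.univ.filter fun k => σ k < σ i).erase j := fun σ => Finset.notMem_erase _ _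
  have hreal : ∀ S : Finset (Fin n), i ∉ S → j ∉ S → ∃ σ : Equiv.Perm (Fin n),
      ((Finset.univ.filter fun k => σ k < σ i).erase j) = S := by
    intro S hiS hjS
    obtain ⟨σ, hσ⟩ := exists_perm i S hiS
    exact ⟨σ, by rw [hσ, Finset.erase_eq_of_notMem hjS]⟩
  have hfacpos : (0:ℝ) < (Nat.factorial n : ℝ) := by
    exact_mod_cast Nat.factorial_pos n
  have hsum_nn : (0:ℝ) ≤ ∑ σ : Equiv.Perm (Fin n),
      ddf n bA i j ((Finset.univ.filter fun k => σ k < σ i).erase j) :=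
    Finset.sum_nonneg fun σ _ => hDnn _ (hiP σ) (hjP σ)
  have hge : 0 ≤ shapley n w q i - shapley n w q j := by
    rw [hΔ]; exact div_nonneg hsum_nn hfacpos.le
  have heqiff : shapley n w q i - shapley n w q j = 0 ↔
      ∀ S : Finset (Fin n), i ∉ S → j ∉ S → ddf n bA i j S = 0 := by
    rw [hΔ, div_eq_zero_iff]
    constructor
    · rintro (hz | hz)
      · intro S hiS hjS
        obtain ⟨σ, hσ⟩ := hreal S hiS hjS
        have h := (Finset.sum_eq_zero_iff_of_nonneg
          (fun σ _ => hDnn _ (hiP σ) (hjP σ))).mp hz σ (mem_univ σ)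
        rwa [hσ] at h
      · exact absurd hz hfacpos.ne'
    · intro hall
      left
      exact Finset.sum_eq_zero fun σ _ => hall _ (hiP σ) (hjP σ)
  have hposif : (∃ S : Finset (Fin n), i ∉ S ∧ j ∉ S ∧ 0 < ddf n bA i j S) →
      0 < shapley n w q i - shapley n w q j := by
    rintro ⟨S, hiS, hjS, hDS⟩
    rw [hΔ]
    apply div_pos ?_ hfacpos
    obtain ⟨σ0, hσ0⟩ := hreal S hiS hjS
    exact Finset.sum_pos' (fun σ _ => hDnn _ (hiP σ) (hjP σ))
      ⟨σ0, mem_univ _, by rw [hσ0]; exact hDS⟩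
  -- decomposition of A
  obtain ⟨CA, hCA, hρA⟩ := benc_decomp i j hij A
  rw [← hmdef] at hCA hρA
  rw [← hbAdef] at hCA
  obtain ⟨ρ, hρdef⟩ : ∃ r : ℕ, r = benc n (A.filter fun k => j < k) := ⟨_, rfl⟩
  rw [← hρdef] at hCA hρA
  -- generic vanishing lemma
  have hvanish : ∀ (u : ℕ), (u < 4*m) → (u ≤ m ∨ 3*m ≤ u) → (bA = 4*m*CA + u) →
      ∀ S : Finset (Fin n), i ∉ S → j ∉ S → ddf n bA i j S = 0 := by
    intro u hu4 hu13 hbAu S hiS hjS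
    obtain ⟨c, hc, hr⟩ := benc_decomp i j hij S
    rw [← hmdef] at hc hr
    rw [if_neg hiS, if_neg hjS] at hc
    unfold ddf
    rw [hbi S hiS, hbj S hjS]
    split_ifs with ha hb
    · norm_num
    · exfalso
      have hb' : m + benc n S < bA := not_le.mp hb
      have H1 : 4*m*c + benc n (S.filter fun k => j < k) + m < 4*m*CA + u := by
        rw [hc] at hb'; rw [hbAu] at hb'; linarith
      have H2 : 4*m*CA + u ≤ 4*m*c + benc n (S.filter fun k => j < k) + 2*m := by
        rw [hc] at ha; rw [hbAu] at ha; linarith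
      obtain ⟨hA1, hA2⟩ := master m c CA u _ hm hr hu4 H1 H2
      omega
    · exfalso
      have := not_le.mp ha
      omega
    · norm_num
  refine ⟨?_, ?_, ?_⟩
  · -- part 1: both in or both out
    intro hmem
    apply sub_eq_zero.mp
    apply heqiff.mpr
    by_cases hiA : i ∈ A
    · have hjA : j ∈ A := hmem.mp hiA
      rw [if_pos hiA, if_pos hjA] at hCA
      exact hvanish (3*m + ρ) (by omega) (Or.inr (by omega)) (by rw [hCA]; ring)
    · have hjA : j ∉ A := fun h => hiA (hmem.mpr h)
      rw [if_neg hiA, if_neg hjA] at hCA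
      exact hvanish ρ (by omega) (Or.inl hρA.le) (by rw [hCA]; ring)
  · -- part 2: i ∉ A, j ∈ A
    intro hiA hjA
    have hwit : (∃ k0 ∈ A, j < k0) → ∃ S : Finset (Fin n), i ∉ S ∧ j ∉ S ∧ 0 < ddf n bA i j S := by
      rintro ⟨k0, hk0A, hjk0⟩
      refine ⟨A.filter (fun k => k < i), ?_, ?_, ?_⟩
      · intro h; exact absurd (mem_filter.mp h).2 (lt_irrefl _)
      · intro h
        have := (mem_filter.mp h).2
        rw [Fin.lt_def] at this; omega
      · have hiS : i ∉ A.filter (fun k => k < i) := by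
          intro h; exact absurd (mem_filter.mp h).2 (lt_irrefl _)
        have hjS : j ∉ A.filter (fun k => k < i) := by
          intro h
          have := (mem_filter.mp h).2
          rw [Fin.lt_def] at this; omega
        have hsplit := benc_split i j hij A
        rw [if_neg hiA, if_pos hjA, ← hmdef, ← hρdef, ← hbAdef] at hsplit
        have hρpos : 0 < ρ := by
          rw [hρdef]
          apply Finset.sum_pos' (fun l _ => Nat.zero_le _)
          exact ⟨k0, mem_filter.mpr ⟨hk0A, hjk0⟩, by positivity⟩
        unfold ddf
        rw [hbi _ hiS, hbj _ hjS]
        rw [if_pos (by rw [hsplit]; omega), if_neg (by rw [hsplit]; omega)]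
        norm_num
    refine ⟨by linarith, ?_, ?_⟩
    · intro heq
      by_contra hcon
      push_neg at hcon
      obtain ⟨k0, hk0A, hk0⟩ := hcon
      have h := hposif (hwit ⟨k0, hk0A, hk0⟩)
      rw [heq] at h
      simp at h
    · intro hmax
      apply sub_eq_zero.mp
      apply heqiff.mpr
      have hρ0 : ρ = 0 := by
        have hem : A.filter (fun k => j < k) = ∅ := by
          ext k
          simp only [mem_filter, Finset.notMem_empty, iff_false, not_and]
          intro hkA
          exact not_lt.mpr (hmax k hkA)
        rw [hρdef, hem]
        rfl
      rw [if_neg hiA, if_pos hjA] at hCA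
      exact hvanish m (by omega) (Or.inl le_rfl) (by rw [hCA, hρ0]; ring)
  · -- part 3: i ∈ A, j ∉ A
    intro hiA hjA
    have h := hposif ?_
    · linarith
    refine ⟨A.erase i, Finset.notMem_erase _ _, fun h => hjA (Finset.mem_of_mem_erase h), ?_⟩
    have hins : insert i (A.erase i) = A := Finset.insert_erase hiA
    have h1 : benc n (insert i (A.erase i)) = bA := by rw [hins, ← hbAdef]
    have h2 : benc n (insert i (A.erase i)) = 2*m + benc n (A.erase i) :=
      hbi _ (Finset.notMem_erase _ _)
    have h3 : benc n (insert j (A.erase i)) = m + benc n (A.erase i) :=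
      hbj _ (fun h => hjA (Finset.mem_of_mem_erase h))
    unfold ddf
    rw [if_pos h1.ge, if_neg (by rw [h3]; omega)]
    norm_num
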